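/- Assume that for every x ∈ X and u ∈ U, sup_{w ∈ W} l(x, u, w) ≥ 0, and that for every y ∈ Y the preimage h^{-1}{y} is a finite indexed set of at most M elements. Then for every horizon N ≥ 0 and every initial measurement y_0 ∈ Y, the optimal finite-horizon worst-case value over all causal strategies equals the (N+1)-st value-iteration function evaluated at the zero information state: inf_{π ∈ Π} J_π^N(y_0) = V_{N+1}(0, y_0). -/

import Mathlib

open scoped BigOperators

noncomputable section

variable {X U W Y : Type*}

/-- The worst-case history `ρ_t(x, y_{0:t-1}, u_{0:t-1})`: the supremum (in `ℝ ∪ {-∞}`,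
with `sSup ∅ = ⊥`) of accumulated stage costs over all disturbance sequences and initial
states whose trajectory reaches `x` at time `t` and is consistent with the measurements. -/
noncomputable def rho (f : X → U → W → X) (h : X → Y) (l : X → U → W → ℝ)
    (t : ℕ) (x : X) (ys : ℕ → Y) (us : ℕ → U) : EReal :=
  sSup { c : EReal | ∃ (xs : ℕ → X) (ws : ℕ → W),
    xs t = x ∧
    (∀ τ < t, xs (τ + 1) = f (xs τ) (us τ) (ws τ)) ∧
    (∀ τ < t, h (xs τ) = ys τ) ∧
    c = ((∑ τ ∈ Finset.range t, l (xs τ) (us τ) (ws τ) : ℝ) : EReal) }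

/-- Inputs generated causally by a strategy `π` from a measurement sequence:
`u_t = μ_t(y_{0:t}, u_{0:t-1})`. -/
noncomputable def inputsOf (π : ℕ → List Y → List U → U) (ys : ℕ → Y) : ℕ → U
  | t => π t ((List.range (t + 1)).map ys) (List.ofFn fun i : Fin t => inputsOf π ys i)
  decreasing_by exact i.isLt

/-- Closed loop: state, list of past measurements and list of past inputs. -/
noncomputable def loop (f : X → U → W → X) (h : X → Y)
    (π : ℕ → List Y → List U → U) (x0 : X) (ws : ℕ → W) : ℕ → X × List Y × List U
  | 0 => (x0, [h x0], [])
  | t + 1 =>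
    let p := loop f h π x0 ws t
    let u := π t p.2.1 p.2.2
    let x' := f p.1 u (ws t)
    (x', p.2.1 ++ [h x'], p.2.2 ++ [u])

/-- Closed-loop state `x_t`. -/
noncomputable def cstate (f : X → U → W → X) (h : X → Y)
    (π : ℕ → List Y → List U → U) (x0 : X) (ws : ℕ → W) (t : ℕ) : X :=
  (loop f h π x0 ws t).1

/-- Closed-loop input `u_t = μ_t(y_{0:t}, u_{0:t-1})`. -/
noncomputable def cinput (f : X → U → W → X) (h : X → Y)
    (π : ℕ → List Y → List U → U) (x0 : X) (ws : ℕ → W) (t : ℕ) : U :=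
  π t (loop f h π x0 ws t).2.1 (loop f h π x0 ws t).2.2

/-- The worst-case `N`-horizon performance `J_π^N(y_0)`. -/
noncomputable def Jcost (f : X → U → W → X) (h : X → Y) (l : X → U → W → ℝ)
    (π : ℕ → List Y → List U → U) (N : ℕ) (y0 : Y) : EReal :=
  sSup { c : EReal | ∃ (x0 : X) (ws : ℕ → W), h x0 = y0 ∧
    c = ((∑ t ∈ Finset.range (N + 1),
      l (cstate f h π x0 ws t) (cinput f h π x0 ws t) (ws t) : ℝ) : EReal) }

/-- The information-state update `g` (componentwise), for preimages of `h`
enumerated by `ξ : Y → Fin M → X`. -/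
noncomputable def gup {M : ℕ} (f : X → U → W → X) (l : X → U → W → ℝ)
    (ξ : Y → Fin M → X) (r : Fin M → EReal) (ynext y : Y) (u : U) : Fin M → EReal :=
  fun i => sSup { c : EReal | ∃ (j : Fin M) (w : W),
    ξ ynext i = f (ξ y j) u w ∧ c = (l (ξ y j) u w : EReal) + r j }

/-- The information state `r_t`, defined recursively by `r_0 = 0` and
`r_t = g(r_{t-1}, y_t, y_{t-1}, u_{t-1})`. -/
noncomputable def rvec {M : ℕ} (f : X → U → W → X) (l : X → U → W → ℝ)
    (ξ : Y → Fin M → X) (ys : ℕ → Y) (us : ℕ → U) : ℕ → Fin M → EReal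
  | 0 => 0
  | t + 1 => gup f l ξ (rvec f l ξ ys us t) (ys (t + 1)) (ys t) (us t)

/-- The Bellman operator `B_u V(r, y) = sup_{v ∈ Y} V(g(r, v, y, u), v)`. -/
noncomputable def Bu {M : ℕ} (f : X → U → W → X) (l : X → U → W → ℝ)
    (ξ : Y → Fin M → X) (V : (Fin M → EReal) → Y → EReal) (u : U)
    (r : Fin M → EReal) (y : Y) : EReal :=
  ⨆ v : Y, V (gup f l ξ r v y u) v

/-- The Bellman operator `B V(r, y) = inf_{u ∈ U} B_u V(r, y)`. -/
noncomputable def Bop {M : ℕ} (f : X → U → W → X) (l : X → U → W → ℝ)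
    (ξ : Y → Fin M → X) (V : (Fin M → EReal) → Y → EReal)
    (r : Fin M → EReal) (y : Y) : EReal :=
  ⨅ u : U, Bu f l ξ V u r y

/-- The value iteration `V_0(r, y) = max_i r^i`, `V_{k+1} = B V_k`. -/
noncomputable def Vseq {M : ℕ} (f : X → U → W → X) (l : X → U → W → ℝ)
    (ξ : Y → Fin M → X) : ℕ → (Fin M → EReal) → Y → EReal
  | 0 => fun r _ => ⨆ i, r i
  | k + 1 => fun r y => Bop f l ξ (Vseq f l ξ k) r y

/-- The (possibly time-varying) information-state feedback policy
`μ_t(y_{0:t}, u_{0:t-1}) = η_t(r_t, y_t)`, where `r_0 = 0` and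
`r_{t+1} = g(r_t, y_{t+1}, y_t, u_t)`. -/
noncomputable def infoStrategyT {M : ℕ} [Nonempty Y] [Nonempty U]
    (f : X → U → W → X) (l : X → U → W → ℝ) (ξ : Y → Fin M → X)
    (η : ℕ → (Fin M → EReal) → Y → U) : ℕ → List Y → List U → U :=
  fun t ysl usl =>
    η t (rvec f l ξ (fun τ => ysl.getD τ (Classical.arbitrary Y))
          (fun τ => usl.getD τ (Classical.arbitrary U)) (ysl.length - 1))
      (ysl.getD (ysl.length - 1) (Classical.arbitrary Y))

/-- Stationary information-state feedback policy `μ_t(y_{0:t}, u_{0:t-1}) = η(r_t, y_t)`. -/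
noncomputable def infoStrategy {M : ℕ} [Nonempty Y] [Nonempty U]
    (f : X → U → W → X) (l : X → U → W → ℝ) (ξ : Y → Fin M → X)
    (η : (Fin M → EReal) → Y → U) : ℕ → List Y → List U → U :=
  infoStrategyT f l ξ (fun _ => η)

end

noncomputable section

namespace FHVaux

variable {X U W Y : Type*}


noncomputable def addIso (c : ℝ) : EReal ≃o EReal where
  toFun x := x + (c : EReal)
  invFun x := x - (c : EReal)
  left_inv _ := EReal.add_sub_cancel_right
  right_inv _ := EReal.sub_add_cancel
  map_rel_iff' := (EReal.addLECancellable_coe c).add_le_add_iff_right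

lemma sSup_add_real (c : ℝ) (s : Set EReal) :
    sSup s + (c : EReal) = ⨆ x ∈ s, (x + (c : EReal)) :=
  (addIso c).map_sSup s

lemma iSup_add_real {ι : Sort*} (c : ℝ) (g : ι → EReal) :
    (⨆ i, g i) + (c : EReal) = ⨆ i, (g i + (c : EReal)) :=
  (addIso c).map_iSup g

section loops
variable (f : X → U → W → X) (h : X → Y) (π : ℕ → List Y → List U → U)

lemma cstate_zero (x0 : X) (ws : ℕ → W) : cstate f h π x0 ws 0 = x0 := rfl

lemma cstate_succ (x0 : X) (ws : ℕ → W) (t : ℕ) :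
    cstate f h π x0 ws (t + 1)
      = f (cstate f h π x0 ws t) (cinput f h π x0 ws t) (ws t) := rfl

lemma loop_ys (x0 : X) (ws : ℕ → W) (t : ℕ) :
    (loop f h π x0 ws t).2.1
      = (List.range (t + 1)).map (fun τ => h (cstate f h π x0 ws τ)) := by
  induction t with
  | zero =>
    show [h x0] = _
    rw [List.range_succ, List.range_zero]
    rfl
  | succ t ih =>
    show (loop f h π x0 ws t).2.1 ++ [h (cstate f h π x0 ws (t + 1))] = _
    rw [List.range_succ, List.map_append, ih]
    simp

lemma loop_us (x0 : X) (ws : ℕ → W) (t : ℕ) :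
    (loop f h π x0 ws t).2.2
      = List.ofFn (fun i : Fin t => cinput f h π x0 ws i) := by
  induction t with
  | zero => simp [loop]
  | succ t ih =>
    show (loop f h π x0 ws t).2.2 ++ [cinput f h π x0 ws t] = _
    rw [ih, List.ofFn_succ']
    simp [List.concat_eq_append]

lemma inputsOf_congr {ys ys' : ℕ → Y} (t : ℕ) (hag : ∀ τ ≤ t, ys τ = ys' τ) :
    inputsOf π ys t = inputsOf π ys' t := by
  induction t using Nat.strong_induction_on with
  | _ t ih =>
    rw [inputsOf, inputsOf]
    congr 1
    · apply List.map_congr_left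
      intro τ hτ
      exact hag τ (by simpa using Nat.lt_succ_iff.mp (List.mem_range.mp hτ))
    · exact congrArg List.ofFn (funext fun i =>
        ih i i.isLt (fun σ hσ => hag σ (le_trans hσ (le_of_lt i.isLt))))

lemma cinput_eq (x0 : X) (ws : ℕ → W) (t : ℕ) :
    cinput f h π x0 ws t = inputsOf π (fun τ => h (cstate f h π x0 ws τ)) t := by
  induction t using Nat.strong_induction_on with
  | _ t ih =>
    rw [inputsOf]
    unfold cinput
    rw [loop_ys, loop_us]
    congr 1
    exact congrArg List.ofFn (funext fun i => ih i i.isLt)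

lemma closed_loop {T : ℕ} (xs : ℕ → X) (ws : ℕ → W) (ys : ℕ → Y)
    (hrec : ∀ τ < T, xs (τ + 1) = f (xs τ) (inputsOf π ys τ) (ws τ))
    (hmeas : ∀ τ < T, h (xs τ) = ys τ) :
    ∀ τ, τ ≤ T → cstate f h π (xs 0) ws τ = xs τ := by
  intro τ
  induction τ using Nat.strong_induction_on with
  | _ τ ih =>
    intro hτ
    match τ with
    | 0 => rfl
    | τ + 1 =>
      have hτ' : τ < T := hτ
      rw [cstate_succ, ih τ (Nat.lt_succ_self τ) (le_of_lt hτ'), hrec τ hτ']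
      congr 1
      rw [cinput_eq]
      apply inputsOf_congr
      intro σ hσ
      rw [ih σ (Nat.lt_succ_of_le hσ) (le_trans hσ (le_of_lt hτ')),
        hmeas σ (lt_of_le_of_lt hσ hτ')]

lemma closed_loop_input {T : ℕ} (xs : ℕ → X) (ws : ℕ → W) (ys : ℕ → Y)
    (hrec : ∀ τ < T, xs (τ + 1) = f (xs τ) (inputsOf π ys τ) (ws τ))
    (hmeas : ∀ τ < T, h (xs τ) = ys τ) :
    ∀ τ < T, cinput f h π (xs 0) ws τ = inputsOf π ys τ := by
  intro τ hτ
  rw [cinput_eq]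
  apply inputsOf_congr
  intro σ hσ
  rw [closed_loop f h π xs ws ys hrec hmeas σ (le_trans hσ (le_of_lt hτ)),
    hmeas σ (lt_of_le_of_lt hσ hτ)]

end loops


section rhosec
variable [Nonempty W]
variable (f : X → U → W → X) (h : X → Y) (l : X → U → W → ℝ)

lemma rho_zero (x : X) (ys : ℕ → Y) (us : ℕ → U) : rho f h l 0 x ys us = 0 := by
  unfold rho
  have hset : { c : EReal | ∃ (xs : ℕ → X) (ws : ℕ → W),
      xs 0 = x ∧
      (∀ τ < 0, xs (τ + 1) = f (xs τ) (us τ) (ws τ)) ∧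
      (∀ τ < 0, h (xs τ) = ys τ) ∧
      c = ((∑ τ ∈ Finset.range 0, l (xs τ) (us τ) (ws τ) : ℝ) : EReal) }
      = {(0 : EReal)} := by
    ext c
    constructor
    · rintro ⟨xs, ws, -, -, -, rfl⟩
      simp
    · rintro rfl
      exact ⟨fun _ => x, fun _ => Classical.arbitrary W, rfl,
        fun τ hτ => absurd hτ (Nat.not_lt_zero τ),
        fun τ hτ => absurd hτ (Nat.not_lt_zero τ), by simp⟩
  rw [hset, csSup_singleton]

lemma mem_preimage_of_hxi {M : ℕ} {ξ : Y → Fin M → X}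
    (hξ : ∀ y : Y, Set.range (ξ y) = {x : X | h x = y}) (y : Y) (j : Fin M) :
    h (ξ y j) = y := by
  have : ξ y j ∈ {x : X | h x = y} := by
    rw [← hξ]; exact Set.mem_range_self j
  exact this

lemma rho_succ {M : ℕ} (ξ : Y → Fin M → X)
    (hξ : ∀ y : Y, Set.range (ξ y) = {x : X | h x = y})
    (ys : ℕ → Y) (us : ℕ → U) (t : ℕ) (i : Fin M) :
    rho f h l (t + 1) (ξ (ys (t + 1)) i) ys us
      = gup f l ξ (fun j => rho f h l t (ξ (ys t) j) ys us)
          (ys (t + 1)) (ys t) (us t) i := by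
  apply le_antisymm
  · refine sSup_le ?_
    rintro c ⟨xs, ws, hxt, hrec, hmeas, rfl⟩
    have hx : xs t ∈ Set.range (ξ (ys t)) := by
      rw [hξ]; exact hmeas t (Nat.lt_succ_self t)
    obtain ⟨j, hj⟩ := hx
    have hmem : ((∑ τ ∈ Finset.range t, l (xs τ) (us τ) (ws τ) : ℝ) : EReal)
        ∈ { c : EReal | ∃ (xs' : ℕ → X) (ws' : ℕ → W),
          xs' t = ξ (ys t) j ∧
          (∀ τ < t, xs' (τ + 1) = f (xs' τ) (us τ) (ws' τ)) ∧
          (∀ τ < t, h (xs' τ) = ys τ) ∧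
          c = ((∑ τ ∈ Finset.range t, l (xs' τ) (us τ) (ws' τ) : ℝ) : EReal) } :=
      ⟨xs, ws, hj.symm, fun τ hτ => hrec τ (Nat.lt_succ_of_lt hτ),
        fun τ hτ => hmeas τ (Nat.lt_succ_of_lt hτ), rfl⟩
    have hle : ((∑ τ ∈ Finset.range t, l (xs τ) (us τ) (ws τ) : ℝ) : EReal)
        ≤ rho f h l t (ξ (ys t) j) ys us := le_sSup hmem
    have hc : ((∑ τ ∈ Finset.range (t + 1), l (xs τ) (us τ) (ws τ) : ℝ) : EReal)
        = (l (ξ (ys t) j) (us t) (ws t) : EReal)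
          + ((∑ τ ∈ Finset.range t, l (xs τ) (us τ) (ws τ) : ℝ) : EReal) := by
      rw [Finset.sum_range_succ, EReal.coe_add, hj, add_comm]
    rw [hc]
    refine le_trans (add_le_add_right hle _) (le_sSup ?_)
    exact ⟨j, ws t, by rw [← hxt, hrec t (Nat.lt_succ_self t), hj], rfl⟩
  · refine sSup_le ?_
    rintro c ⟨j, w, hf, rfl⟩
    have hb : (fun j => rho f h l t (ξ (ys t) j) ys us) j
        = rho f h l t (ξ (ys t) j) ys us := rfl
    rw [add_comm, hb]
    unfold rho
    rw [sSup_add_real]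
    refine iSup₂_le ?_
    rintro b ⟨xs, ws, hxt, hrec, hmeas, rfl⟩
    refine le_sSup ⟨fun τ => if τ = t + 1 then f (xs t) (us t) w else xs τ,
      Function.update ws t w, ?_, ?_, ?_, ?_⟩
    · beta_reduce
      rw [if_pos rfl, hxt, hf]
    · intro τ hτ
      rcases Nat.lt_succ_iff_lt_or_eq.mp hτ with hτ' | rfl
      · have h1 : τ + 1 ≠ t + 1 := by omega
        have h2 : τ ≠ t + 1 := by omega
        beta_reduce
        rw [if_neg h1, if_neg h2, Function.update_of_ne (by omega : τ ≠ t)]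
        exact hrec τ hτ'
      · beta_reduce
        rw [if_pos rfl, if_neg (by omega : τ ≠ τ + 1), Function.update_self]
    · intro τ hτ
      have h2 : τ ≠ t + 1 := by omega
      beta_reduce
      rw [if_neg h2]
      rcases Nat.lt_succ_iff_lt_or_eq.mp hτ with hτ' | rfl
      · exact hmeas τ hτ'
      · rw [hxt]
        exact mem_preimage_of_hxi h hξ (ys τ) j
    · rw [Finset.sum_range_succ]
      have hterms : ∀ τ ∈ Finset.range t,
          l (if τ = t + 1 then f (xs t) (us t) w else xs τ) (us τ)
            (Function.update ws t w τ)
          = l (xs τ) (us τ) (ws τ) := by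
        intro τ hτ
        have hτ' := Finset.mem_range.mp hτ
        rw [if_neg (by omega : τ ≠ t + 1),
          Function.update_of_ne (by omega : τ ≠ t)]
      rw [Finset.sum_congr rfl hterms, EReal.coe_add]
      have hne : (t = t + 1) = False := by simp
      simp only [Function.update_self, hne, if_false, hxt]

lemma rvec_eq_rho {M : ℕ} (ξ : Y → Fin M → X)
    (hξ : ∀ y : Y, Set.range (ξ y) = {x : X | h x = y})
    (ys : ℕ → Y) (us : ℕ → U) (t : ℕ) (i : Fin M) :
    rvec f l ξ ys us t i = rho f h l t (ξ (ys t) i) ys us := by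
  induction t generalizing i with
  | zero => rw [rho_zero]; rfl
  | succ t ih =>
    have hr : rvec f l ξ ys us t = fun j => rho f h l t (ξ (ys t) j) ys us :=
      funext ih
    show gup f l ξ (rvec f l ξ ys us t) (ys (t + 1)) (ys t) (us t) i = _
    rw [hr, rho_succ f h l ξ hξ]

lemma rvec_congr {M : ℕ} (ξ : Y → Fin M → X) {ys ys' : ℕ → Y} {us us' : ℕ → U}
    (t : ℕ) (hy : ∀ τ ≤ t, ys τ = ys' τ) (hu : ∀ τ < t, us τ = us' τ) :
    rvec f l ξ ys us t = rvec f l ξ ys' us' t := by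
  induction t with
  | zero => rfl
  | succ t ih =>
    show gup f l ξ (rvec f l ξ ys us t) (ys (t + 1)) (ys t) (us t)
      = gup f l ξ (rvec f l ξ ys' us' t) (ys' (t + 1)) (ys' t) (us' t)
    rw [ih (fun τ hτ => hy τ (le_trans hτ (Nat.le_succ t)))
        (fun τ hτ => hu τ (Nat.lt_succ_of_lt hτ)),
      hy (t + 1) le_rfl, hy t (Nat.le_succ t), hu t (Nat.lt_succ_self t)]

end rhosec


section vi
variable [Nonempty W] [Nonempty U]
variable (f : X → U → W → X) (h : X → Y) (l : X → U → W → ℝ)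
variable {M : ℕ} (ξ : Y → Fin M → X)

lemma Bop_mono {V V' : (Fin M → EReal) → Y → EReal}
    (hV : ∀ r y, V r y ≤ V' r y) (r : Fin M → EReal) (y : Y) :
    Bop f l ξ V r y ≤ Bop f l ξ V' r y :=
  iInf_mono fun _ => iSup_mono fun v => hV _ v

lemma V0_le_V1 (hξ : ∀ y : Y, Set.range (ξ y) = {x : X | h x = y})
    (pos : ∀ (x : X) (u : U), (0 : EReal) ≤ ⨆ w : W, (l x u w : EReal))
    (r : Fin M → EReal) (y : Y) :
    Vseq f l ξ 0 r y ≤ Vseq f l ξ 1 r y := by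
  show (⨆ i, r i) ≤ Bop f l ξ (Vseq f l ξ 0) r y
  refine le_iInf fun u => ?_
  refine iSup_le fun j => ?_
  have key : ∀ w : W, (l (ξ y j) u w : EReal) + r j
      ≤ Bu f l ξ (Vseq f l ξ 0) u r y := by
    intro w
    have hx : f (ξ y j) u w ∈ Set.range (ξ (h (f (ξ y j) u w))) := by
      rw [hξ]; exact rfl
    obtain ⟨i, hi⟩ := hx
    have h1 : (l (ξ y j) u w : EReal) + r j
        ≤ gup f l ξ r (h (f (ξ y j) u w)) y u i :=
      le_sSup ⟨j, w, hi, rfl⟩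
    have h2 : gup f l ξ r (h (f (ξ y j) u w)) y u i
        ≤ Vseq f l ξ 0 (gup f l ξ r (h (f (ξ y j) u w)) y u)
            (h (f (ξ y j) u w)) := le_iSup _ i
    exact le_trans h1 (le_trans h2 (le_iSup
      (fun v => Vseq f l ξ 0 (gup f l ξ r v y u) v) (h (f (ξ y j) u w))))
  refine le_trans ?_ (iSup_le key)
  by_cases hbot : r j = ⊥
  · rw [hbot]; exact bot_le
  by_cases htop : r j = ⊤
  case pos =>
    rw [htop]
    have : (l (ξ y j) u (Classical.arbitrary W) : EReal) + ⊤ = ⊤ := by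
      rw [EReal.add_top_of_ne_bot (EReal.coe_ne_bot _)]
    exact le_trans (le_of_eq this.symm)
      (le_iSup (fun w => (l (ξ y j) u w : EReal) + ⊤) (Classical.arbitrary W))
  case neg =>
    obtain ⟨c, hrj⟩ : ∃ c : ℝ, r j = (c : EReal) :=
      ⟨(r j).toReal, (EReal.coe_toReal htop hbot).symm⟩
    rw [hrj, ← iSup_add_real]
    calc (c : EReal) = 0 + (c : EReal) := (zero_add _).symm
    _ ≤ (⨆ w : W, (l (ξ y j) u w : EReal)) + (c : EReal) :=
      add_le_add_left (pos (ξ y j) u) _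

lemma Vseq_mono (hξ : ∀ y : Y, Set.range (ξ y) = {x : X | h x = y})
    (pos : ∀ (x : X) (u : U), (0 : EReal) ≤ ⨆ w : W, (l x u w : EReal))
    (k : ℕ) (r : Fin M → EReal) (y : Y) :
    Vseq f l ξ k r y ≤ Vseq f l ξ (k + 1) r y := by
  induction k generalizing r y with
  | zero => exact V0_le_V1 f h l ξ hξ pos r y
  | succ k ih => exact Bop_mono f l ξ (fun r y => ih r y) r y

lemma V0_le_Vk (hξ : ∀ y : Y, Set.range (ξ y) = {x : X | h x = y})
    (pos : ∀ (x : X) (u : U), (0 : EReal) ≤ ⨆ w : W, (l x u w : EReal))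
    (k : ℕ) (r : Fin M → EReal) (y : Y) :
    Vseq f l ξ 0 r y ≤ Vseq f l ξ k r y := by
  induction k with
  | zero => exact le_rfl
  | succ k ih => exact le_trans ih (Vseq_mono f h l ξ hξ pos k r y)

lemma Vseq_le_sup_rvec (π : ℕ → List Y → List U → U) (k : ℕ) :
    ∀ (t : ℕ) (ys : ℕ → Y),
    Vseq f l ξ k (rvec f l ξ ys (inputsOf π ys) t) (ys t)
      ≤ ⨆ (ys' : ℕ → Y) (_ : ∀ τ ≤ t, ys' τ = ys τ),
          ⨆ i, rvec f l ξ ys' (inputsOf π ys') (t + k) i := by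
  induction k with
  | zero =>
    intro t ys
    refine iSup_le fun i => ?_
    refine le_trans (le_iSup _ i) ?_
    exact le_iSup₂ (f := fun ys' (_ : ∀ τ ≤ t, ys' τ = ys τ) =>
      ⨆ i, rvec f l ξ ys' (inputsOf π ys') (t + 0) i) ys (fun τ _ => rfl)
  | succ k ih =>
    intro t ys
    refine le_trans (iInf_le _ (inputsOf π ys t)) ?_
    refine iSup_le fun v => ?_
    set ys1 := Function.update ys (t + 1) v with hys1
    have hag : ∀ τ ≤ t, ys1 τ = ys τ := fun τ hτ =>
      Function.update_of_ne (by omega) _ _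
    have hus : ∀ τ ≤ t, inputsOf π ys1 τ = inputsOf π ys τ := fun τ hτ =>
      inputsOf_congr π τ (fun σ hσ => hag σ (le_trans hσ hτ))
    have h1 : ys1 (t + 1) = v := Function.update_self _ _ _
    have hr : rvec f l ξ ys1 (inputsOf π ys1) (t + 1)
        = gup f l ξ (rvec f l ξ ys (inputsOf π ys) t) v (ys t)
            (inputsOf π ys t) := by
      show gup f l ξ (rvec f l ξ ys1 (inputsOf π ys1) t) (ys1 (t + 1)) (ys1 t)
          (inputsOf π ys1 t) = _
      rw [rvec_congr f l ξ t hag (fun τ hτ => hus τ (le_of_lt hτ)),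
        h1, hag t le_rfl, hus t le_rfl]
    have step : Vseq f l ξ k
        (gup f l ξ (rvec f l ξ ys (inputsOf π ys) t) v (ys t)
          (inputsOf π ys t)) v
        = Vseq f l ξ k (rvec f l ξ ys1 (inputsOf π ys1) (t + 1)) (ys1 (t + 1)) := by
      rw [hr, h1]
    rw [step]
    refine le_trans (ih (t + 1) ys1) ?_
    refine iSup₂_le fun ys' hys' => ?_
    have hys'' : ∀ τ ≤ t, ys' τ = ys τ := fun τ hτ =>
      (hys' τ (by omega)).trans (hag τ hτ)
    have harith : t + 1 + k = t + (k + 1) := by omega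
    rw [harith]
    exact le_iSup₂ (f := fun ys'' (_ : ∀ τ ≤ t, ys'' τ = ys τ) =>
      ⨆ i, rvec f l ξ ys'' (inputsOf π ys'') (t + (k + 1)) i) ys' hys''

end vi


section jc
variable [Nonempty W] [Nonempty U]
variable (f : X → U → W → X) (h : X → Y) (l : X → U → W → ℝ)
variable {M : ℕ} (ξ : Y → Fin M → X)

lemma rvec_le_Jcost (hξ : ∀ y : Y, Set.range (ξ y) = {x : X | h x = y})
    (π : ℕ → List Y → List U → U) (N : ℕ) (y0 : Y)
    (ys : ℕ → Y) (h0 : ys 0 = y0) (i : Fin M) :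
    rvec f l ξ ys (inputsOf π ys) (N + 1) i ≤ Jcost f h l π N y0 := by
  rw [rvec_eq_rho f h l ξ hξ]
  refine sSup_le ?_
  rintro c ⟨xs, ws, hxt, hrec, hmeas, rfl⟩
  refine le_sSup ⟨xs 0, ws, ?_, ?_⟩
  · rw [hmeas 0 (Nat.succ_pos N), h0]
  · congr 1
    refine Finset.sum_congr rfl fun τ hτ => ?_
    have hτ' : τ < N + 1 := Finset.mem_range.mp hτ
    rw [closed_loop f h π xs ws ys hrec hmeas τ (le_of_lt hτ'),
      closed_loop_input f h π xs ws ys hrec hmeas τ hτ']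

lemma Vseq_le_Jcost (hξ : ∀ y : Y, Set.range (ξ y) = {x : X | h x = y})
    (π : ℕ → List Y → List U → U) (N : ℕ) (y0 : Y) :
    Vseq f l ξ (N + 1) 0 y0 ≤ Jcost f h l π N y0 := by
  have h0 : Vseq f l ξ (N + 1) 0 y0
      = Vseq f l ξ (N + 1)
          (rvec f l ξ (fun _ => y0) (inputsOf π (fun _ => y0)) 0)
          ((fun _ : ℕ => y0) 0) := rfl
  rw [h0]
  refine le_trans (Vseq_le_sup_rvec f l ξ π (N + 1) 0 (fun _ => y0)) ?_
  refine iSup₂_le fun ys' hys' => ?_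
  refine iSup_le fun i => ?_
  have : (0 : ℕ) + (N + 1) = N + 1 := by omega
  rw [this]
  exact rvec_le_Jcost f h l ξ hξ π N y0 ys' (hys' 0 le_rfl) i

end jc


section strat
variable [Nonempty W] [Nonempty U] [Nonempty Y]
variable (f : X → U → W → X) (h : X → Y) (l : X → U → W → ℝ)
variable {M : ℕ} (ξ : Y → Fin M → X)

lemma getD_map_range {α : Type*} (g : ℕ → α) (d : α) (n τ : ℕ) (hτ : τ < n) :
    ((List.range n).map g).getD τ d = g τ := by
  rw [List.getD_eq_getElem _ _ (by simpa using hτ)]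
  simp

lemma getD_ofFn {α : Type*} (n : ℕ) (g : Fin n → α) (d : α) (τ : ℕ) (hτ : τ < n) :
    (List.ofFn g).getD τ d = g ⟨τ, hτ⟩ := by
  rw [List.getD_eq_getElem _ _ (by simpa using hτ)]
  simp

lemma cinput_infoT (η : ℕ → (Fin M → EReal) → Y → U)
    (x0 : X) (ws : ℕ → W) (t : ℕ) :
    cinput f h (infoStrategyT f l ξ η) x0 ws t
      = η t (rvec f l ξ
              (fun τ => h (cstate f h (infoStrategyT f l ξ η) x0 ws τ))
              (cinput f h (infoStrategyT f l ξ η) x0 ws) t)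
          (h (cstate f h (infoStrategyT f l ξ η) x0 ws t)) := by
  set π := infoStrategyT f l ξ η with hπ
  have hL : cinput f h π x0 ws t
      = π t (loop f h π x0 ws t).2.1 (loop f h π x0 ws t).2.2 := rfl
  rw [hL, loop_ys, loop_us]
  simp only [hπ, infoStrategyT, List.length_map, List.length_range,
    Nat.add_sub_cancel]
  congr 1
  · apply rvec_congr
    · intro τ hτ
      exact getD_map_range _ _ _ τ (by omega)
    · intro τ hτ
      rw [getD_ofFn _ _ _ τ hτ]
  · exact getD_map_range _ _ _ t (by omega)

end strat

end FHVaux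

end

/-- Under the positivity and finite-preimage assumptions, the optimal
finite-horizon worst-case value over all causal strategies equals the `(N+1)`-st
value-iteration function at the zero information state:
`inf_π J_π^N(y_0) = V_{N+1}(0, y_0)`. -/
theorem finite_horizon_value_eq_VI {X U W Y : Type*} [Nonempty X] [Nonempty U]
    [Nonempty W] [Nonempty Y] {M : ℕ} (f : X → U → W → X) (h : X → Y)
    (hsurj : Function.Surjective h) (l : X → U → W → ℝ) (ξ : Y → Fin M → X)
    (pos : ∀ (x : X) (u : U), (0 : EReal) ≤ ⨆ w : W, (l x u w : EReal))
    (hξ : ∀ y : Y, Set.range (ξ y) = {x : X | h x = y})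
    (N : ℕ) (y0 : Y) :
    (⨅ π : ℕ → List Y → List U → U, Jcost f h l π N y0)
      = Vseq f l ξ (N + 1) 0 y0 := by
  classical
  obtain ⟨xinit, hxinit⟩ := hsurj y0
  have hne : Nonempty (Fin M) := by
    have hmem : xinit ∈ Set.range (ξ y0) := by rw [hξ]; exact hxinit
    obtain ⟨i0, -⟩ := hmem
    exact ⟨i0⟩
  have hV0 : (0 : EReal) ≤ Vseq f l ξ (N + 1) 0 y0 := by
    have h00 : Vseq f l ξ 0 (0 : Fin M → EReal) y0 = 0 := by
      show (⨆ _ : Fin M, (0 : EReal)) = 0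
      exact iSup_const
    calc (0 : EReal) = Vseq f l ξ 0 0 y0 := h00.symm
    _ ≤ _ := FHVaux.V0_le_Vk f h l ξ hξ pos (N + 1) 0 y0
  refine le_antisymm ?_ (le_iInf fun π => FHVaux.Vseq_le_Jcost f h l ξ hξ π N y0)
  by_cases htop : Vseq f l ξ (N + 1) 0 y0 = ⊤
  · rw [htop]; exact le_top
  have hbot : Vseq f l ξ (N + 1) 0 y0 ≠ ⊥ := by
    intro hb
    rw [hb] at hV0
    exact absurd hV0 (by simp)
  obtain ⟨Vr, hVr⟩ : ∃ c : ℝ, Vseq f l ξ (N + 1) 0 y0 = (c : EReal) :=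
    ⟨(Vseq f l ξ (N + 1) 0 y0).toReal, (EReal.coe_toReal htop hbot).symm⟩
  -- key bound with ε-optimal strategy
  have key : ∀ ε : ℝ, 0 < ε →
      (⨅ π : ℕ → List Y → List U → U, Jcost f h l π N y0)
        ≤ ((Vr + ((N : ℝ) + 1) * ε : ℝ) : EReal) := by
    intro ε hε
    set η : ℕ → (Fin M → EReal) → Y → U := fun t r y =>
      if hc : ∃ u, Bu f l ξ (Vseq f l ξ (N - t)) u r y
          ≤ ((Vr + ((t : ℝ) + 1) * ε : ℝ) : EReal)
      then hc.choose else Classical.arbitrary U with hη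
    set π := infoStrategyT f l ξ η with hπ
    refine le_trans (iInf_le _ π) (sSup_le ?_)
    rintro c ⟨x0, ws, hx0, rfl⟩
    set ys : ℕ → Y := fun τ => h (cstate f h π x0 ws τ) with hys
    set us : ℕ → U := cinput f h π x0 ws with husdef
    have hstep : ∀ t, us t = η t (rvec f l ξ ys us t) (ys t) := fun t =>
      FHVaux.cinput_infoT f h l ξ η x0 ws t
    have hinv : ∀ t ≤ N + 1,
        Vseq f l ξ (N + 1 - t) (rvec f l ξ ys us t) (ys t)
          ≤ ((Vr + (t : ℝ) * ε : ℝ) : EReal) := by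
      intro t
      induction t with
      | zero =>
        intro _
        have hy0 : ys 0 = y0 := by rw [hys]; exact hx0
        have h0 : rvec f l ξ ys us 0 = 0 := rfl
        rw [h0, hy0]
        simp only [Nat.cast_zero, zero_mul, add_zero]
        exact le_of_eq hVr
      | succ t ih =>
        intro ht1
        have htN : t ≤ N := by omega
        have ihv := ih (by omega)
        have harith : N + 1 - t = (N - t) + 1 := by omega
        rw [harith] at ihv
        have hlt : ((Vr + (t : ℝ) * ε : ℝ) : EReal)
            < ((Vr + ((t : ℝ) + 1) * ε : ℝ) : EReal) := by
          exact_mod_cast (by nlinarith : (Vr + (t : ℝ) * ε : ℝ) < Vr + ((t : ℝ) + 1) * ε)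
        have hiinf : (⨅ u, Bu f l ξ (Vseq f l ξ (N - t)) u
            (rvec f l ξ ys us t) (ys t))
            < ((Vr + ((t : ℝ) + 1) * ε : ℝ) : EReal) :=
          lt_of_le_of_lt ihv hlt
        obtain ⟨u', hu'⟩ := iInf_lt_iff.mp hiinf
        have hex : ∃ u, Bu f l ξ (Vseq f l ξ (N - t)) u
            (rvec f l ξ ys us t) (ys t)
            ≤ ((Vr + ((t : ℝ) + 1) * ε : ℝ) : EReal) := ⟨u', le_of_lt hu'⟩
        have hchoice : Bu f l ξ (Vseq f l ξ (N - t)) (us t)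
            (rvec f l ξ ys us t) (ys t)
            ≤ ((Vr + ((t : ℝ) + 1) * ε : ℝ) : EReal) := by
          rw [hstep t]
          simp only [hη]
          rw [dif_pos hex]
          exact hex.choose_spec
        have hnext : Vseq f l ξ (N - t) (rvec f l ξ ys us (t + 1)) (ys (t + 1))
            ≤ ((Vr + ((t : ℝ) + 1) * ε : ℝ) : EReal) := by
          have hrv : rvec f l ξ ys us (t + 1)
              = gup f l ξ (rvec f l ξ ys us t) (ys (t + 1)) (ys t) (us t) := rfl
          rw [hrv]
          refine le_trans ?_ hchoice
          exact le_iSup (fun v => Vseq f l ξ (N - t)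
            (gup f l ξ (rvec f l ξ ys us t) v (ys t) (us t)) v) (ys (t + 1))
        have harith2 : N + 1 - (t + 1) = N - t := by omega
        rw [harith2]
        have hcast : ((t + 1 : ℕ) : ℝ) = (t : ℝ) + 1 := by push_cast; ring
        rw [hcast]
        exact hnext
    -- cost bound
    have hmem : ((∑ t ∈ Finset.range (N + 1),
        l (cstate f h π x0 ws t) (cinput f h π x0 ws t) (ws t) : ℝ) : EReal)
        ∈ { c : EReal | ∃ (xs : ℕ → X) (ws' : ℕ → W),
          xs (N + 1) = cstate f h π x0 ws (N + 1) ∧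
          (∀ τ < N + 1, xs (τ + 1) = f (xs τ) (us τ) (ws' τ)) ∧
          (∀ τ < N + 1, h (xs τ) = ys τ) ∧
          c = ((∑ τ ∈ Finset.range (N + 1),
            l (xs τ) (us τ) (ws' τ) : ℝ) : EReal) } :=
      ⟨cstate f h π x0 ws, ws, rfl, fun τ _ => rfl, fun τ _ => rfl, rfl⟩
    have hpre : cstate f h π x0 ws (N + 1) ∈ Set.range (ξ (ys (N + 1))) := by
      rw [hξ]; exact rfl
    obtain ⟨i, hi⟩ := hpre
    have hc1 : ((∑ t ∈ Finset.range (N + 1),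
        l (cstate f h π x0 ws t) (cinput f h π x0 ws t) (ws t) : ℝ) : EReal)
        ≤ rho f h l (N + 1) (ξ (ys (N + 1)) i) ys us := by
      refine le_sSup ?_
      rw [hi]
      exact hmem
    rw [← FHVaux.rvec_eq_rho f h l ξ hξ ys us (N + 1) i] at hc1
    have hfin := hinv (N + 1) le_rfl
    rw [Nat.sub_self] at hfin
    have hc2 : rvec f l ξ ys us (N + 1) i
        ≤ Vseq f l ξ 0 (rvec f l ξ ys us (N + 1)) (ys (N + 1)) :=
      le_iSup (fun j => rvec f l ξ ys us (N + 1) j) i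
    have hcast : ((N + 1 : ℕ) : ℝ) = (N : ℝ) + 1 := by push_cast; ring
    rw [hcast] at hfin
    exact le_trans hc1 (le_trans hc2 hfin)
  -- conclude
  refine le_of_forall_gt_imp_ge_of_dense ?_
  intro c hc
  by_cases hct : c = ⊤
  · rw [hct]; exact le_top
  have hcb : c ≠ ⊥ := by
    intro hb
    rw [hb] at hc
    exact absurd hc (by simp)
  obtain ⟨cr, hcr⟩ : ∃ r : ℝ, c = (r : EReal) :=
    ⟨c.toReal, (EReal.coe_toReal hct hcb).symm⟩
  have hcrV : Vr < cr := by
    rw [hVr, hcr] at hc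
    exact_mod_cast hc
  have hNpos : (0 : ℝ) < (N : ℝ) + 1 := by positivity
  set ε := (cr - Vr) / ((N : ℝ) + 1) with hεdef
  have hε : 0 < ε := div_pos (by linarith) hNpos
  have hsum : Vr + ((N : ℝ) + 1) * ε = cr := by
    rw [hεdef, mul_div_cancel₀ (cr - Vr) hNpos.ne']
    ring
  calc (⨅ π : ℕ → List Y → List U → U, Jcost f h l π N y0)
      ≤ ((Vr + ((N : ℝ) + 1) * ε : ℝ) : EReal) := key ε hε
  _ = ((cr : ℝ) : EReal) := by rw [hsum]
  _ = c := hcr.symm
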